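/- arXiv:1109.6925 — 2 statements merged into one kernel-verified Lean document; each statement's English description precedes it below -/
import Mathlib

section
/- Let $n \ge 2$ and let $\lambda_2$ be the second smallest eigenvalue of the Laplacian of a connected graph $G$ on $n$ vertices with diameter $\mathrm{diam}(G)$. Then $\mathrm{diam}(G) \ge 4/(n\lambda_2)$, and consequently $\lambda_2 \ge 4/n^2$. -/
open Matrix

lemma walk_sq_le' {n : ℕ} {G : SimpleGraph (Fin n)} (f : Fin n → ℝ) :
    ∀ {u w : Fin n} (q : G.Walk u w),
      (f u - f w)^2 ≤ (q.length : ℝ) *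
        (q.darts.map (fun d => (f d.toProd.1 - f d.toProd.2)^2)).sum := by
  intro u w q
  induction q with
  | nil => simp
  | @cons u x w h q ih =>
      have hS : (0:ℝ) ≤ (q.darts.map (fun d => (f d.toProd.1 - f d.toProd.2)^2)).sum := by
        apply List.sum_nonneg
        intro a ha
        simp only [List.mem_map] at ha
        obtain ⟨d, _, rfl⟩ := ha
        positivity
      simp only [SimpleGraph.Walk.darts_cons, SimpleGraph.Walk.length_cons, List.map_cons,
        List.sum_cons, Nat.cast_add, Nat.cast_one]
      set S := (q.darts.map (fun d => (f d.toProd.1 - f d.toProd.2)^2)).sum with hSdef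
      set L := (q.length : ℝ) with hLdef
      have hL : (0:ℝ) ≤ L := by positivity
      rcases eq_or_lt_of_le hL with hL0 | hLpos
      · have ht : (f x - f w)^2 ≤ 0 := by rw [← hL0] at ih; simpa using ih
        have ht0 : f x - f w = 0 := by nlinarith [sq_nonneg (f x - f w)]
        have : f u - f w = f u - f x := by linarith [sub_eq_zero.mp ht0]
        rw [this, ← hL0]
        nlinarith [sq_nonneg (f u - f x)]
      · have key : 0 ≤ (L + 1) * (L * S - (f x - f w)^2) :=
          mul_nonneg (by linarith) (by linarith [ih])
        nlinarith [sq_nonneg (L * (f u - f x) - (f x - f w)), hLpos, key]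

open Matrix

lemma path_dart_sum_le' {n : ℕ} {G : SimpleGraph (Fin n)} [DecidableRel G.Adj] (f : Fin n → ℝ)
    {u w : Fin n} (q : G.Walk u w) (hq : q.IsPath) :
    2 * (q.darts.map (fun d => (f d.toProd.1 - f d.toProd.2)^2)).sum ≤
      ∑ i, ∑ j, if G.Adj i j then (f i - f j)^2 else 0 := by
  classical
  set g : Fin n × Fin n → ℝ := fun p => if G.Adj p.1 p.2 then (f p.1 - f p.2)^2 else 0 with hg
  have hedges : (q.darts.map SimpleGraph.Dart.edge).Nodup := hq.isTrail.edges_nodup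
  have hdn : q.darts.Nodup := hedges.of_map _
  have hinj := List.inj_on_of_nodup_map hedges
  set l1 : List (Fin n × Fin n) := q.darts.map SimpleGraph.Dart.toProd with hl1
  set l2 : List (Fin n × Fin n) := q.darts.map (fun d => d.toProd.swap) with hl2
  have hn1 : l1.Nodup := hdn.map SimpleGraph.Dart.toProd_injective
  have hn2 : l2.Nodup := hdn.map (fun a b hab => by
    apply SimpleGraph.Dart.toProd_injective
    exact Prod.swap_injective hab)
  have hdisj : l1.Disjoint l2 := by
    intro p hp1 hp2
    simp only [hl1, hl2, List.mem_map] at hp1 hp2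
    obtain ⟨d1, hd1, rfl⟩ := hp1
    obtain ⟨d2, hd2, hd2e⟩ := hp2
    have hedge : d1.edge = d2.edge := by
      rw [SimpleGraph.Dart.edge, SimpleGraph.Dart.edge, ← hd2e]
      exact (Sym2.mk_prod_swap_eq).symm
    have : d1 = d2 := hinj hd1 hd2 hedge
    subst this
    have h1 := congrArg Prod.fst hd2e
    simp only [Prod.fst_swap] at h1
    exact d1.snd_ne_fst h1
  have hPnodup : (l1 ++ l2).Nodup := List.nodup_append'.mpr ⟨hn1, hn2, hdisj⟩
  have hsum1 : (l1.map g).sum = (q.darts.map (fun d => (f d.toProd.1 - f d.toProd.2)^2)).sum := by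
    rw [hl1, List.map_map]
    congr 1
    apply List.map_congr_left
    intro d _
    simp [hg, d.adj]
  have hsum2 : (l2.map g).sum = (q.darts.map (fun d => (f d.toProd.1 - f d.toProd.2)^2)).sum := by
    rw [hl2, List.map_map]
    congr 1
    apply List.map_congr_left
    intro d _
    have : G.Adj d.toProd.2 d.toProd.1 := d.adj.symm
    simp only [Function.comp, hg, Prod.fst_swap, Prod.snd_swap, if_pos this]
    ring
  have htot : ((l1 ++ l2).map g).sum =
      2 * (q.darts.map (fun d => (f d.toProd.1 - f d.toProd.2)^2)).sum := by
    rw [List.map_append, List.sum_append, hsum1, hsum2]; ring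
  rw [← htot]
  rw [← List.sum_toFinset g hPnodup]
  have hle : ∑ p ∈ (l1 ++ l2).toFinset, g p ≤ ∑ p : Fin n × Fin n, g p := by
    apply Finset.sum_le_sum_of_subset_of_nonneg (Finset.subset_univ _)
    intro p _ _
    simp only [hg]
    positivity
  refine hle.trans ?_
  rw [Fintype.sum_prod_type]

open Matrix

theorem stmt_12 (n : ℕ) (hn : 2 ≤ n) (G : SimpleGraph (Fin n)) [DecidableRel G.Adj]
    (hconn : G.Connected)
    (lam : Fin n → ℝ) (v : Fin n → Fin n → ℝ)
    (hmono : Monotone lam)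
    (horth : ∀ i j, v i ⬝ᵥ v j = if i = j then (1 : ℝ) else 0)
    (heig : ∀ i, (G.lapMatrix ℝ).mulVec (v i) = lam i • v i) :
    (G.diam : ℝ) ≥ 4 / (n * lam ⟨1, hn⟩) ∧ lam ⟨1, hn⟩ ≥ 4 / (n : ℝ) ^ 2 := by
  classical
  haveI : Nonempty (Fin n) := ⟨⟨0, by omega⟩⟩
  set i0 : Fin n := ⟨0, by omega⟩ with hi0
  set i1 : Fin n := ⟨1, hn⟩ with hi1
  set f : Fin n → ℝ := v i1 with hf
  set lam1 : ℝ := lam i1 with hlam1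
  have hn0 : (0:ℝ) < n := by positivity
  have hff : f ⬝ᵥ f = 1 := by simpa using horth i1 i1
  have hLf : G.lapMatrix ℝ *ᵥ f = lam1 • f := heig i1
  have hquad : f ⬝ᵥ (G.lapMatrix ℝ *ᵥ f) = lam1 := by
    rw [hLf, dotProduct_smul, hff, smul_eq_mul, mul_one]
  have hform : lam1 = (∑ i, ∑ j, if G.Adj i j then (f i - f j)^2 else 0) / 2 := by
    rw [← hquad, ← Matrix.toLinearMap₂'_apply', SimpleGraph.lapMatrix_toLinearMap₂']
  -- quadratic form of v i0
  have hquad0 : v i0 ⬝ᵥ (G.lapMatrix ℝ *ᵥ v i0) = lam i0 := by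
    rw [heig i0, dotProduct_smul, horth i0 i0, if_pos rfl, smul_eq_mul, mul_one]
  -- nonnegativity of eigenvalues
  have hpsd := (SimpleGraph.posSemidef_lapMatrix ℝ G).dotProduct_mulVec_nonneg
  have hlam1_nonneg : 0 ≤ lam1 := by
    have := hpsd f
    rwa [star_trivial, hquad] at this
  have hlam0_nonneg : 0 ≤ lam i0 := by
    have := hpsd (v i0)
    rwa [star_trivial, hquad0] at this
  -- lam1 > 0
  have hlam1_pos : 0 < lam1 := by
    rcases hlam1_nonneg.lt_or_eq with h | h
    · exact h
    · exfalso
      have hlam1_eq : lam1 = 0 := h.symm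
      have hle01 : lam i0 ≤ lam1 := hmono (by simp [hi0, hi1, Fin.mk_le_mk])
      have hlam0_eq : lam i0 = 0 := le_antisymm (by linarith) hlam0_nonneg
      have hconst : ∀ (x : Fin n → ℝ), x ⬝ᵥ (G.lapMatrix ℝ *ᵥ x) = 0 →
          ∀ i j, x i = x j := by
        intro x hx i j
        have h0 : Matrix.toLinearMap₂' ℝ (G.lapMatrix ℝ) x x = 0 := by
          rw [Matrix.toLinearMap₂'_apply']; exact hx
        exact (SimpleGraph.lapMatrix_toLinearMap₂'_apply'_eq_zero_iff_forall_reachable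
          G x).1 h0 i j (hconn.preconnected i j)
      have hc1 : ∀ i j, f i = f j := hconst f (by rw [hquad, hlam1_eq])
      have hc0 : ∀ i j, v i0 i = v i0 j := hconst (v i0) (by rw [hquad0, hlam0_eq])
      set c : ℝ := v i0 i0 with hc
      set d : ℝ := f i0 with hd
      have e1 : (n:ℝ) * (c * c) = 1 := by
        have h00 := horth i0 i0
        rw [if_pos rfl] at h00
        have hsum : v i0 ⬝ᵥ v i0 = ∑ _i : Fin n, c * c := by
          rw [dotProduct]
          exact Finset.sum_congr rfl (fun i _ => by rw [hc0 i i0])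
        rw [hsum, Finset.sum_const, Finset.card_univ, Fintype.card_fin, nsmul_eq_mul] at h00
        exact h00
      have e2 : (n:ℝ) * (d * d) = 1 := by
        have h11 := hff
        have hsum : f ⬝ᵥ f = ∑ _i : Fin n, d * d := by
          rw [dotProduct]
          exact Finset.sum_congr rfl (fun i _ => by rw [hc1 i i0])
        rw [hsum, Finset.sum_const, Finset.card_univ, Fintype.card_fin, nsmul_eq_mul] at h11
        exact h11
      have e3 : (n:ℝ) * (c * d) = 0 := by
        have h01 : i0 ≠ i1 := by simp [hi0, hi1, Fin.ext_iff]
        have h0v := horth i0 i1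
        rw [if_neg h01] at h0v
        have hsum : v i0 ⬝ᵥ v i1 = ∑ _i : Fin n, c * d := by
          rw [dotProduct]
          exact Finset.sum_congr rfl (fun i _ => by
            rw [hc0 i i0]; exact congrArg (fun t => c * t) (hc1 i i0))
        rw [hsum, Finset.sum_const, Finset.card_univ, Fintype.card_fin, nsmul_eq_mul] at h0v
        exact h0v
      nlinarith [e1, e2, e3]
  -- sum of f is zero
  have hsumf : ∑ i, f i = 0 := by
    have h1 : (fun _ : Fin n => (1:ℝ)) ⬝ᵥ (G.lapMatrix ℝ *ᵥ f) = lam1 * ∑ i, f i := by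
      rw [hLf, dotProduct_smul, smul_eq_mul]
      congr 1
      simp [dotProduct]
    have h2 : (fun _ : Fin n => (1:ℝ)) ⬝ᵥ (G.lapMatrix ℝ *ᵥ f) = 0 := by
      rw [Matrix.dotProduct_mulVec]
      have hsymm : (G.lapMatrix ℝ)ᵀ = G.lapMatrix ℝ := G.isSymm_lapMatrix (R := ℝ)
      have : (fun _ : Fin n => (1:ℝ)) ᵥ* G.lapMatrix ℝ = 0 := by
        rw [← hsymm, Matrix.vecMul_transpose, SimpleGraph.lapMatrix_mulVec_const_eq_zero]
      rw [this, zero_dotProduct]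
    have := h1.symm.trans h2
    rcases mul_eq_zero.mp this with h | h
    · exact absurd h hlam1_pos.ne'
    · exact h
  -- sum of squares is 1
  have hsq : ∑ i, f i * f i = 1 := by
    rw [← hff]; rfl
  -- max and min
  obtain ⟨u, -, hu⟩ := Finset.exists_max_image Finset.univ f ⟨i0, Finset.mem_univ _⟩
  obtain ⟨w, -, hw⟩ := Finset.exists_min_image Finset.univ f ⟨i0, Finset.mem_univ _⟩
  have hu' : ∀ i, f i ≤ f u := fun i => hu i (Finset.mem_univ _)
  have hw' : ∀ i, f w ≤ f i := fun i => hw i (Finset.mem_univ _)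
  -- key inequality 4 ≤ n (f u - f w)^2
  have hexp : ∑ i, (f u - f i) * (f i - f w)
      = f u * (∑ i, f i) - (n:ℝ) * (f u * f w) - (∑ i, f i * f i) + (∑ i, f i) * f w := by
    have hpt : ∀ i : Fin n, (f u - f i) * (f i - f w)
        = (f u * f i - f i * f i) + (f i * f w - f u * f w) := fun i => by ring
    rw [Finset.sum_congr rfl (fun i _ => hpt i), Finset.sum_add_distrib,
      Finset.sum_sub_distrib, Finset.sum_sub_distrib, ← Finset.mul_sum, ← Finset.sum_mul,
      Finset.sum_const, Finset.card_univ, Fintype.card_fin, nsmul_eq_mul]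
    ring
  have hnn : 0 ≤ ∑ i, (f u - f i) * (f i - f w) :=
    Finset.sum_nonneg fun i _ => mul_nonneg (by linarith [hu' i]) (by linarith [hw' i])
  have hkey : 4 ≤ (n:ℝ) * (f u - f w)^2 := by
    rw [hexp, hsumf, hsq] at hnn
    nlinarith [mul_nonneg hn0.le (sq_nonneg (f u + f w))]
  -- shortest path from u to w
  obtain ⟨p, hp⟩ := (hconn.preconnected u w).exists_walk_length_eq_dist
  set q := p.bypass with hqdef
  have hqpath : q.IsPath := p.bypass_isPath
  have hqlen : q.length ≤ G.dist u w := hp ▸ p.length_bypass_le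
  -- dart sum bound
  set S : ℝ := (q.darts.map (fun d => (f d.toProd.1 - f d.toProd.2)^2)).sum with hS
  have hS_nonneg : 0 ≤ S := by
    apply List.sum_nonneg
    intro a ha
    simp only [List.mem_map] at ha
    obtain ⟨dd, -, rfl⟩ := ha
    positivity
  have hS_le : S ≤ lam1 := by
    have h2S := path_dart_sum_le' f q hqpath
    linarith [hform, h2S]
  have hCS : (f u - f w)^2 ≤ (q.length : ℝ) * S := walk_sq_le' f q
  -- ediam not top
  have hediam : G.ediam ≠ ⊤ := by
    obtain ⟨a, b, hab⟩ := G.exists_edist_eq_ediam_of_finite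
    rw [← hab]
    exact (SimpleGraph.edist_ne_top_iff_reachable).2 (hconn.preconnected a b)
  have hdd : G.dist u w ≤ G.diam := SimpleGraph.dist_le_diam hediam
  have hql : (q.length : ℝ) ≤ (G.diam : ℝ) := by
    exact_mod_cast le_trans hqlen hdd
  have hmain : 4 ≤ (n:ℝ) * ((G.diam : ℝ) * lam1) := by
    have h1 : (f u - f w)^2 ≤ (G.diam : ℝ) * lam1 := by
      calc (f u - f w)^2 ≤ (q.length : ℝ) * S := hCS
        _ ≤ (G.diam : ℝ) * lam1 := by
            apply mul_le_mul hql hS_le hS_nonneg (by positivity)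
    nlinarith [hkey, mul_le_mul_of_nonneg_left h1 hn0.le]
  -- diam < n
  have hdiamlt : (G.diam : ℝ) ≤ (n:ℝ) := by
    obtain ⟨a, b, hab⟩ := SimpleGraph.exists_dist_eq_diam (G := G)
    obtain ⟨p', hp'⟩ := (hconn.preconnected a b).exists_walk_length_eq_dist
    have h1 : G.dist a b ≤ p'.bypass.length := SimpleGraph.dist_le _
    have h2 : p'.bypass.length < n := by
      have := p'.bypass_isPath.length_lt
      simpa [Fintype.card_fin] using this
    have : G.diam < n := by omega
    exact_mod_cast this.le
  constructor
  · rw [ge_iff_le, div_le_iff₀ (by positivity : (0:ℝ) < n * lam1)]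
    calc (4:ℝ) ≤ (n:ℝ) * ((G.diam : ℝ) * lam1) := hmain
      _ = (G.diam : ℝ) * ((n:ℝ) * lam1) := by ring
  · rw [ge_iff_le, div_le_iff₀ (by positivity : (0:ℝ) < (n:ℝ)^2)]
    have h5 : (G.diam:ℝ) * lam1 ≤ (n:ℝ) * lam1 :=
      mul_le_mul_of_nonneg_right hdiamlt hlam1_nonneg
    have h6 : (n:ℝ) * ((G.diam:ℝ) * lam1) ≤ (n:ℝ) * ((n:ℝ) * lam1) :=
      mul_le_mul_of_nonneg_left h5 hn0.le
    calc (4:ℝ) ≤ (n:ℝ) * ((G.diam : ℝ) * lam1) := hmain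
      _ ≤ (n:ℝ) * ((n:ℝ) * lam1) := h6
      _ = lam1 * (n:ℝ)^2 := by ring
end

section
/- Let $e \in \mathbb{R}^n$ with $\sum_i e_i = 0$, $s_i > 0$, $\Psi_0 = \sum_i e_i^2/s_i$, $\bar{s}_h = n/\sum_i (1/s_i)$ and $\bar{s}_a = \frac{1}{n}\sum_i s_i$. Define $\Psi_1 = \sum_i (e_i+1/2)^2/s_i - n/(4\bar{s}_a)$. Then $\Psi_1 \le \Psi_0 + \sqrt{\Psi_0 \cdot n/\bar{s}_h} + \frac{n}{4}\left(\frac{1}{\bar{s}_h} - \frac{1}{\bar{s}_a}\right)$. -/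
theorem stmt_14 (n : ℕ) (hn : 0 < n) (e s : Fin n → ℝ)
    (he : ∑ i, e i = 0) (hs : ∀ i, 0 < s i) :
    ∑ i, (e i + 1 / 2) ^ 2 / s i - (n : ℝ) / (4 * ((∑ i, s i) / n)) ≤
      (∑ i, e i ^ 2 / s i) +
        Real.sqrt ((∑ i, e i ^ 2 / s i) * ((n : ℝ) / ((n : ℝ) / ∑ i, 1 / s i))) +
        (n : ℝ) / 4 * (1 / ((n : ℝ) / ∑ i, 1 / s i) - 1 / ((∑ i, s i) / n)) := by
  have hn' : (0 : ℝ) < n := by exact_mod_cast hn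
  set A := ∑ i, e i ^ 2 / s i with hA
  set B := ∑ i, 1 / s i with hB
  have hBpos : 0 < B := Finset.sum_pos (fun i _ => div_pos one_pos (hs i)) (by
    simpa using Finset.univ_nonempty_iff.mpr ⟨⟨0, hn⟩⟩)
  have hsimp : (n : ℝ) / ((n : ℝ) / B) = B := by
    field_simp
  have hkey : ∑ i, (e i + 1 / 2) ^ 2 / s i
      = A + (∑ i, e i / s i) + (1/4) * B := by
    rw [hA, hB, Finset.mul_sum, ← Finset.sum_add_distrib, ← Finset.sum_add_distrib]
    refine Finset.sum_congr rfl fun i _ => by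
      have := (hs i).ne'
      field_simp
      ring
  have hcs : (∑ i, e i / s i) ^ 2 ≤ A * B := by
    have h := Finset.sum_mul_sq_le_sq_mul_sq Finset.univ
      (fun i => e i / Real.sqrt (s i)) (fun i => 1 / Real.sqrt (s i))
    have e1 : ∀ i : Fin n, e i / Real.sqrt (s i) * (1 / Real.sqrt (s i)) = e i / s i := by
      intro i
      have h1 : Real.sqrt (s i) ≠ 0 := Real.sqrt_ne_zero'.mpr (hs i)
      rw [div_mul_div_comm, mul_one, Real.mul_self_sqrt (hs i).le]
    have e2 : ∀ i : Fin n, (e i / Real.sqrt (s i)) ^ 2 = e i ^ 2 / s i := by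
      intro i
      rw [div_pow, Real.sq_sqrt (hs i).le]
    have e3 : ∀ i : Fin n, (1 / Real.sqrt (s i)) ^ 2 = 1 / s i := by
      intro i
      rw [div_pow, Real.sq_sqrt (hs i).le, one_pow]
    simpa only [e1, e2, e3] using h
  have hcross : (∑ i, e i / s i) ≤ Real.sqrt (A * B) := by
    calc (∑ i, e i / s i) ≤ |∑ i, e i / s i| := le_abs_self _
    _ = Real.sqrt ((∑ i, e i / s i) ^ 2) := (Real.sqrt_sq_eq_abs _).symm
    _ ≤ Real.sqrt (A * B) := Real.sqrt_le_sqrt hcs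
  have hSpos : 0 < ∑ i, s i := Finset.sum_pos (fun i _ => hs i) (by
    simpa using Finset.univ_nonempty_iff.mpr ⟨⟨0, hn⟩⟩)
  have h2 : (n : ℝ) / 4 * (1 / ((n : ℝ) / B) - 1 / ((∑ i, s i) / n))
      = B / 4 - (n : ℝ) / (4 * ((∑ i, s i) / n)) := by
    field_simp
  rw [hkey, hsimp, h2]
  linarith [hcross]
end
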